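/- Let n ≥ 6 and let α, β be distinct positive roots of A_{n−1}. If w ∈ S_n is such that w·(−2α−2β) = w(−2α−2β+ρ) − ρ is dominant, then w·(−2α−2β) = 0. -/

import Mathlib

/-- ρ = (n−1, n−2, …, 1, 0) for type A_{n−1} realized in ℤ^n. -/
def weylRho (n : ℕ) : Fin n → ℤ := fun i => (n : ℤ) - 1 - (i : ℕ)

/-- The action of `w ∈ S_n` on weights: `w(λ)_i = λ_{w⁻¹(i)}`. -/
def wAct {n : ℕ} (w : Equiv.Perm (Fin n)) (lam : Fin n → ℤ) : Fin n → ℤ :=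
  fun i => lam (w⁻¹ i)

/-- The dot action `w·λ = w(λ+ρ) − ρ`. -/
def dotAct {n : ℕ} (w : Equiv.Perm (Fin n)) (lam : Fin n → ℤ) : Fin n → ℤ :=
  fun i => lam (w⁻¹ i) + weylRho n (w⁻¹ i) - weylRho n i

/-- `λ` is dominant iff `λ_1 ≥ λ_2 ≥ ⋯ ≥ λ_n`. -/
def IsDominant {n : ℕ} (lam : Fin n → ℤ) : Prop :=
  ∀ i j : Fin n, i ≤ j → lam j ≤ lam i

/-- The root `e_i − e_j`. -/
def posRoot {n : ℕ} (i j : Fin n) : Fin n → ℤ :=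
  fun k => (if k = i then 1 else 0) - (if k = j then 1 else 0)

/-- Positive roots of A_{n−1}: `e_i − e_j` with `i < j`. -/
def IsPosRoot {n : ℕ} (x : Fin n → ℤ) : Prop :=
  ∃ i j : Fin n, i < j ∧ x = posRoot i j

/-- Negative roots of A_{n−1}. -/
def IsNegRoot {n : ℕ} (x : Fin n → ℤ) : Prop :=
  ∃ i j : Fin n, i < j ∧ x = -(posRoot i j)

/-- The length ℓ(w): the number of positive roots sent to negative roots by `w`,
i.e. the number of inversions of `w`. -/
def weylLen {n : ℕ} (w : Equiv.Perm (Fin n)) : ℕ :=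
  (Finset.univ.filter (fun p : Fin n × Fin n => p.1 < p.2 ∧ w p.2 < w p.1)).card

/- ### Auxiliary lemmas -/

lemma sum_indicator_mul {n : ℕ} (a c : Fin n) :
    ∑ i : Fin n, (if i = a then (1:ℤ) else 0) * (if i = c then 1 else 0)
      = if a = c then 1 else 0 := by
  classical
  simp only [ite_mul, one_mul, zero_mul]
  simp [Finset.sum_ite_eq']

lemma sum_posRoot_mul {n : ℕ} (a b c d : Fin n) :
    ∑ i : Fin n, posRoot a b i * posRoot c d i =
    (if a = c then (1:ℤ) else 0) + (if b = d then 1 else 0)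
      - (if a = d then 1 else 0) - (if b = c then 1 else 0) := by
  classical
  unfold posRoot
  simp only [sub_mul, mul_sub, Finset.sum_sub_distrib, sum_indicator_mul]
  ring

lemma sum_posRoot_mul_rho {n : ℕ} (a b : Fin n) :
    ∑ i : Fin n, posRoot a b i * weylRho n i = (b : ℤ) - (a : ℤ) := by
  classical
  unfold posRoot
  simp only [sub_mul, Finset.sum_sub_distrib, ite_mul, one_mul, zero_mul,
    Finset.sum_ite_eq', Finset.mem_univ, if_true]
  unfold weylRho
  ring

lemma sum_posRoot {n : ℕ} (a b : Fin n) :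
    ∑ i : Fin n, posRoot a b i = 0 := by
  classical
  unfold posRoot
  simp [Finset.sum_sub_distrib, Finset.sum_ite_eq']

lemma part_A {n : ℕ} (hn : 2 ≤ n) (ν : Fin n → ℤ)
    (hmono : ∀ i j : Fin n, i ≤ j → ν j ≤ ν i)
    (hsum : ∑ i, ν i = 0) (hne : ν ≠ 0) :
    2 * (n:ℤ) ≤ ∑ i, (ν i^2 + 2 * ν i * weylRho n i) := by
  classical
  have npos : 0 < n := by omega
  set z0 : Fin n := ⟨0, npos⟩ with hz0
  set zl : Fin n := ⟨n-1, by omega⟩ with hzl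
  have h0 : 1 ≤ ν z0 := by
    by_contra h
    push_neg at h
    have hall : ∀ i : Fin n, ν i ≤ 0 := by
      intro i
      have : ν i ≤ ν z0 := hmono z0 i (by rw [Fin.le_def, hz0]; exact Nat.zero_le _)
      omega
    have hz : ∀ i ∈ Finset.univ, ν i = 0 :=
      (Finset.sum_eq_zero_iff_of_nonpos (fun i _ => hall i)).mp hsum
    exact hne (funext fun i => hz i (Finset.mem_univ i))
  have hl : ν zl ≤ -1 := by
    by_contra h
    push_neg at h
    have hall : ∀ i : Fin n, 0 ≤ ν i := by
      intro i
      have : ν zl ≤ ν i := hmono i zl (by rw [Fin.le_def, hzl]; have := i.isLt; show (i:ℕ) ≤ n-1; omega)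
      omega
    have hz := (Finset.sum_eq_zero_iff_of_nonneg (fun i _ => hall i)).mp hsum
    exact hne (funext fun i => hz i (Finset.mem_univ i))
  have hS : ∀ k ∈ Finset.range (n-1),
      (1:ℤ) ≤ ∑ i ∈ Finset.univ.filter (fun i : Fin n => (i:ℕ) ≤ k), ν i := by
    intro k hk
    rw [Finset.mem_range] at hk
    set k' : Fin n := ⟨k+1, by omega⟩ with hk'
    by_cases hc : 0 ≤ ν k'
    · have hz0mem : z0 ∈ Finset.univ.filter (fun i : Fin n => (i:ℕ) ≤ k) := by
        simp [hz0]
      refine le_trans h0 (Finset.single_le_sum ?_ hz0mem)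
      intro i hi
      refine le_trans hc (hmono i k' ?_)
      simp only [Finset.mem_filter] at hi
      simp [Fin.le_def, hk']
      omega
    · push_neg at hc
      have hsplit := Finset.sum_filter_add_sum_filter_not Finset.univ
        (fun i : Fin n => (i:ℕ) ≤ k) ν
      rw [hsum] at hsplit
      have hkey : (1:ℤ) ≤ ∑ i ∈ Finset.univ.filter (fun i : Fin n => ¬ (i:ℕ) ≤ k), (-ν i) := by
        have hmem : k' ∈ Finset.univ.filter (fun i : Fin n => ¬ (i:ℕ) ≤ k) := by
          simp [hk']
        refine le_trans (by omega : (1:ℤ) ≤ -ν k')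
          (Finset.single_le_sum (f := fun i => -ν i) ?_ hmem)
        intro i hi
        simp only [Finset.mem_filter, not_le] at hi
        have : ν i ≤ ν k' := hmono k' i (by simp [Fin.le_def, hk']; omega)
        show (0:ℤ) ≤ -ν i
        omega
      rw [Finset.sum_neg_distrib] at hkey
      omega
  have hrho : ∀ i : Fin n, weylRho n i
      = ∑ k ∈ Finset.range (n-1), (if (i:ℕ) ≤ k then (1:ℤ) else 0) := by
    intro i
    rw [Finset.sum_boole]
    have hfil : (Finset.range (n-1)).filter (fun k => (i:ℕ) ≤ k) = Finset.Ico (i:ℕ) (n-1) := by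
      ext k
      simp [Finset.mem_Ico, and_comm]
    rw [hfil, Nat.card_Ico]
    have hi : (i:ℕ) < n := i.isLt
    unfold weylRho
    omega
  have hip : (n:ℤ) - 1 ≤ ∑ i, ν i * weylRho n i := by
    have h1 : ∑ i, ν i * weylRho n i
        = ∑ k ∈ Finset.range (n-1), ∑ i ∈ Finset.univ.filter (fun i : Fin n => (i:ℕ) ≤ k), ν i := by
      calc ∑ i, ν i * weylRho n i
          = ∑ i : Fin n, ∑ k ∈ Finset.range (n-1), (if (i:ℕ) ≤ k then ν i else 0) := by
            refine Finset.sum_congr rfl fun i _ => ?_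
            rw [hrho i, Finset.mul_sum]
            refine Finset.sum_congr rfl fun k _ => ?_
            split <;> simp
        _ = ∑ k ∈ Finset.range (n-1), ∑ i : Fin n, (if (i:ℕ) ≤ k then ν i else 0) :=
            Finset.sum_comm
        _ = ∑ k ∈ Finset.range (n-1), ∑ i ∈ Finset.univ.filter (fun i : Fin n => (i:ℕ) ≤ k), ν i := by
            refine Finset.sum_congr rfl fun k _ => ?_
            rw [Finset.sum_filter]
    rw [h1]
    calc (n:ℤ) - 1 = ∑ _k ∈ Finset.range (n-1), (1:ℤ) := by
          rw [Finset.sum_const, Finset.card_range, nsmul_eq_mul, mul_one]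
          omega
      _ ≤ _ := Finset.sum_le_sum hS
  have hsq : (2:ℤ) ≤ ∑ i, ν i ^ 2 := by
    have hz0l : z0 ≠ zl := by
      simp only [hz0, hzl, ne_eq, Fin.mk.injEq]
      omega
    have hsub : ∑ i ∈ ({z0, zl} : Finset (Fin n)), ν i ^ 2 ≤ ∑ i, ν i ^ 2 := by
      refine Finset.sum_le_sum_of_subset_of_nonneg (Finset.subset_univ _) ?_
      intro i _ _
      positivity
    rw [Finset.sum_insert (by simp [hz0l]), Finset.sum_singleton] at hsub
    nlinarith [h0, hl]
  have hsplit : ∑ i, (ν i^2 + 2 * ν i * weylRho n i)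
      = (∑ i, ν i ^ 2) + 2 * ∑ i, ν i * weylRho n i := by
    rw [Finset.sum_add_distrib, Finset.mul_sum]
    congr 1
    refine Finset.sum_congr rfl fun i _ => by ring
  rw [hsplit]
  linarith

def mu6 (a b c d i : Fin 6) : ℤ :=
  (5 : ℤ) - (i:ℕ) - 2*(if i=a then 1 else 0) + 2*(if i=b then 1 else 0)
    - 2*(if i=c then 1 else 0) + 2*(if i=d then 1 else 0)

lemma fin6_dup : ∀ a b c d : Fin 6, a < b → c < d →
    ((a = c ∧ b ≠ d) ∨ (b = d ∧ a ≠ c)) →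
    ((b:ℕ) - (a:ℕ)) + ((d:ℕ) - (c:ℕ)) = 3 →
    ∃ i j : Fin 6, i ≠ j ∧ mu6 a b c d i = mu6 a b c d j := by decide

/-- For n ≥ 6 and distinct positive roots α, β of A_{n−1},
if w·(−2α−2β) is dominant then it is zero. -/
theorem dot_neg_2a_2b_dominant_eq_zero (n : ℕ) (hn : 6 ≤ n) (α β : Fin n → ℤ)
    (hα : IsPosRoot α) (hβ : IsPosRoot β) (hne : α ≠ β) (w : Equiv.Perm (Fin n))
    (hdom : IsDominant (dotAct w (-(2 • α) - 2 • β))) :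
    dotAct w (-(2 • α) - 2 • β) = 0 := by
  classical
  obtain ⟨a, b, hab, rfl⟩ := hα
  obtain ⟨c, d, hcd, rfl⟩ := hβ
  set lam : Fin n → ℤ := -(2 • posRoot a b) - 2 • posRoot c d with hlam
  set ν : Fin n → ℤ := dotAct w lam with hν
  by_contra hν0
  set μ : Fin n → ℤ := fun i => lam i + weylRho n i with hμdef
  have hνi : ∀ i, ν i = μ (w⁻¹ i) - weylRho n i := by
    intro i
    simp only [hν, dotAct, hμdef]
  have hlami : ∀ i, lam i = -2 * posRoot a b i - 2 * posRoot c d i := by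
    intro i
    have h2 : (2 : Fin n → ℤ) i = 2 := rfl
    simp only [hlam, Pi.sub_apply, Pi.neg_apply, Pi.smul_apply, smul_eq_mul, Pi.mul_apply, h2]
    ring
  -- μ is injective
  have hμinj : Function.Injective μ := by
    have hg : ∀ i j : Fin n, i < j → μ (w⁻¹ j) < μ (w⁻¹ i) := by
      intro i j hij
      have h1 : ν j ≤ ν i := hdom i j (le_of_lt hij)
      rw [hνi, hνi] at h1
      have h2 : weylRho n j < weylRho n i := by
        unfold weylRho
        have := (Fin.lt_def).mp hij
        omega
      omega
    intro i j hij
    by_contra hne'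
    have hwne : w i ≠ w j := fun h => hne' (w.injective h)
    rcases lt_or_gt_of_ne hwne with h | h
    · have := hg _ _ h
      rw [(show ∀ x, w⁻¹ (w x) = x from fun x => w.symm_apply_apply x), (show ∀ x, w⁻¹ (w x) = x from fun x => w.symm_apply_apply x)] at this
      omega
    · have := hg _ _ h
      rw [(show ∀ x, w⁻¹ (w x) = x from fun x => w.symm_apply_apply x), (show ∀ x, w⁻¹ (w x) = x from fun x => w.symm_apply_apply x)] at this
      omega
  -- sum of ν is 0
  have hsumlam : ∑ i, lam i = 0 := by
    calc ∑ i, lam i = ∑ i, (-2 * posRoot a b i - 2 * posRoot c d i) :=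
          Finset.sum_congr rfl fun i _ => hlami i
      _ = -2 * (∑ i, posRoot a b i) - 2 * (∑ i, posRoot c d i) := by
          rw [Finset.sum_sub_distrib, ← Finset.mul_sum, ← Finset.mul_sum]
      _ = 0 := by rw [sum_posRoot, sum_posRoot]; ring
  have hsumν : ∑ i, ν i = 0 := by
    have h1 : ∑ i, ν i = (∑ i, μ (w⁻¹ i)) - ∑ i, weylRho n i := by
      rw [← Finset.sum_sub_distrib]
      exact Finset.sum_congr rfl fun i _ => hνi i
    have h2 : ∑ i, μ (w⁻¹ i) = ∑ i, μ i := Equiv.sum_comp w⁻¹ μ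
    have h3 : ∑ i, μ i = (∑ i, lam i) + ∑ i, weylRho n i := by
      rw [← Finset.sum_add_distrib]
    rw [h1, h2, h3, hsumlam]
    ring
  -- the norm computation
  have hA : 2 * (n:ℤ) ≤ ∑ i, (ν i^2 + 2 * ν i * weylRho n i) :=
    part_A (by omega) ν hdom hsumν hν0
  have hEμ : ∑ i, (ν i^2 + 2 * ν i * weylRho n i) = ∑ i, (μ i^2 - weylRho n i^2) := by
    calc ∑ i, (ν i^2 + 2 * ν i * weylRho n i)
        = ∑ i, (μ (w⁻¹ i)^2 - weylRho n i^2) := by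
          refine Finset.sum_congr rfl fun i _ => ?_
          rw [hνi]
          ring
      _ = (∑ i, μ (w⁻¹ i)^2) - ∑ i, weylRho n i ^2 := Finset.sum_sub_distrib _ _
      _ = (∑ i, μ i^2) - ∑ i, weylRho n i^2 := by
          rw [Equiv.sum_comp w⁻¹ (fun i => μ i ^ 2)]
      _ = ∑ i, (μ i^2 - weylRho n i^2) := (Finset.sum_sub_distrib _ _).symm
  have hEval : ∑ i, (μ i^2 - weylRho n i^2)
      = 16 + 8*((if a = c then (1:ℤ) else 0) + (if b = d then 1 else 0)
          - (if a = d then 1 else 0) - (if b = c then 1 else 0))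
        - 4*((b:ℤ) - (a:ℤ)) - 4*((d:ℤ) - (c:ℤ)) := by
    have hpt : ∀ i, μ i^2 - weylRho n i^2
        = 4*(posRoot a b i * posRoot a b i) + 8*(posRoot a b i * posRoot c d i)
          + 4*(posRoot c d i * posRoot c d i)
          - 4*(posRoot a b i * weylRho n i) - 4*(posRoot c d i * weylRho n i) := by
      intro i
      simp only [hμdef]
      rw [hlami i]
      ring
    rw [Finset.sum_congr rfl fun i _ => hpt i]
    rw [Finset.sum_sub_distrib, Finset.sum_sub_distrib, Finset.sum_add_distrib,
      Finset.sum_add_distrib, ← Finset.mul_sum, ← Finset.mul_sum, ← Finset.mul_sum,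
      ← Finset.mul_sum, ← Finset.mul_sum, sum_posRoot_mul, sum_posRoot_mul,
      sum_posRoot_mul, sum_posRoot_mul_rho, sum_posRoot_mul_rho]
    have hab' : a ≠ b := ne_of_lt hab
    have hcd' : c ≠ d := ne_of_lt hcd
    rw [if_pos rfl, if_pos rfl, if_pos rfl, if_pos rfl, if_neg hab', if_neg hab'.symm,
      if_neg hcd', if_neg hcd'.symm]
    ring
  have hbig : 2 * (n:ℤ) ≤ 16 + 8*((if a = c then (1:ℤ) else 0) + (if b = d then 1 else 0)
          - (if a = d then 1 else 0) - (if b = c then 1 else 0))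
        - 4*((b:ℤ) - (a:ℤ)) - 4*((d:ℤ) - (c:ℤ)) := by
    rw [← hEval, ← hEμ]
    exact hA
  have hne' : ¬((a:ℕ) = (c:ℕ) ∧ (b:ℕ) = (d:ℕ)) := by
    rintro ⟨h1, h2⟩
    exact hne (by rw [Fin.val_injective h1, Fin.val_injective h2])
  have habv : (a:ℕ) < (b:ℕ) := hab
  have hcdv : (c:ℕ) < (d:ℕ) := hcd
  simp only [Fin.ext_iff] at hbig
  have hkey : (((a:ℕ) = (c:ℕ) ∧ (b:ℕ) ≠ (d:ℕ)) ∨ ((b:ℕ) = (d:ℕ) ∧ (a:ℕ) ≠ (c:ℕ)))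
      ∧ ((b:ℕ) - (a:ℕ)) + ((d:ℕ) - (c:ℕ)) = 3 ∧ n = 6 := by
    split_ifs at hbig <;> omega
  obtain ⟨hdisj, hs3, hn6⟩ := hkey
  subst hn6
  have hμ6 : ∀ i, μ i = mu6 a b c d i := by
    intro i
    simp only [hμdef]
    rw [hlami i]
    unfold posRoot weylRho mu6
    push_cast
    ring
  have hdisj' : (a = c ∧ b ≠ d) ∨ (b = d ∧ a ≠ c) := by
    rcases hdisj with ⟨h1, h2⟩ | ⟨h1, h2⟩
    · exact Or.inl ⟨Fin.val_injective h1, fun h => h2 (by rw [h])⟩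
    · exact Or.inr ⟨Fin.val_injective h1, fun h => h2 (by rw [h])⟩
  obtain ⟨i, j, hij, hmu⟩ := fin6_dup a b c d hab hcd hdisj' hs3
  exact hij (hμinj ((hμ6 i).trans (hmu.trans (hμ6 j).symm)))
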